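/- In a group G that is an extension of a torsion-free group by an abelian group (i.e., G has a torsion-free normal subgroup K with G/K abelian), the normaliser of any finite subgroup S ≤ G equals its centraliser. -/

import Mathlib

/-- In a (torsion-free)-by-abelian group, the normaliser of a finite subgroup equals
its centraliser. -/
theorem stmt_6 (G : Type*) [Group G] (K : Subgroup G) [K.Normal]
    (hTF : ∀ g ∈ K, g ≠ 1 → ¬ IsOfFinOrder g)
    (hAb : ∀ a b : G ⧸ K, a * b = b * a)
    (S : Subgroup G) (hS : Finite S) :
    Subgroup.normalizer (S : Set G) = Subgroup.centralizer (S : Set G) := by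
  apply le_antisymm
  · intro g hg
    rw [Subgroup.mem_centralizer_iff]
    intro s hs
    rw [Subgroup.mem_normalizer_iff] at hg
    have hgs : g * s * g⁻¹ ∈ S := (hg s).mp hs
    have hxS : g * s * g⁻¹ * s⁻¹ ∈ S := S.mul_mem hgs (S.inv_mem hs)
    have hxK : g * s * g⁻¹ * s⁻¹ ∈ K := by
      rw [← QuotientGroup.eq_one_iff]
      have h := hAb ((g : G) : G ⧸ K) ((s : G) : G ⧸ K)
      simp only [QuotientGroup.mk_mul, QuotientGroup.mk_inv]
      rw [show ((g : G ⧸ K) * s * (g : G ⧸ K)⁻¹ * (s : G ⧸ K)⁻¹ : G ⧸ K)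
            = (↑g * ↑s) * ((↑s : G ⧸ K) * ↑g)⁻¹ by group, h]
      group
    have hfin : IsOfFinOrder (g * s * g⁻¹ * s⁻¹) := by
      have : IsOfFinOrder (⟨g * s * g⁻¹ * s⁻¹, hxS⟩ : S) := isOfFinOrder_of_finite _
      exact (Submonoid.isOfFinOrder_coe).mpr this
    have hone : g * s * g⁻¹ * s⁻¹ = 1 := by
      by_contra h
      exact hTF _ hxK h hfin
    have : g * s = s * g := by
      have := mul_eq_one_iff_eq_inv.mp hone
      rw [inv_inv] at this
      calc g * s = (g * s * g⁻¹ * s⁻¹) * (s * g) := by group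
        _ = s * g := by rw [hone, one_mul]
    exact this.symm
  · intro g hg
    rw [Subgroup.mem_centralizer_iff] at hg
    rw [Subgroup.mem_normalizer_iff]
    intro h
    constructor
    · intro hh
      have := hg h hh
      rw [show g * h * g⁻¹ = g * h * g⁻¹ from rfl, ← this]
      simpa [mul_assoc] using hh
    · intro hh
      have := hg _ hh
      have hh2 : h = g * h * g⁻¹ := by
        have h3 : g * h = g * (g * h * g⁻¹) := by rw [← this]; group
        exact mul_left_cancel h3
      rw [hh2]; exact hh
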